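/- arXiv:1007.1378 — 3 statements merged into one kernel-verified Lean document; each statement's English description precedes it below -/
import Mathlib

section
/- Under the edge-insertion process for $G^*(n,m)$: let $q \in [0,1]$, $k \ge 1$, $M \ge m$, and suppose $\Pr[X_{n,M}(k) > 0] \ge 1-q$. Let $h > 2\,\mathbb{E}[X_{n,M}(k)]$. Then $\Pr\left[X_{n,m}(k) < h^{-1}\mathbb{E}[X_{n,m}(k)]\right] \le 2q$. -/
open Finset

open scoped Classical

/-- Number of independent `k`-subsets of `[n]` with respect to a list of `t` edges. -/
def indepCount (n k t : ℕ) (e : Fin t → Fin n × Fin n) : ℕ :=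
  (((Finset.univ : Finset (Fin n)).powersetCard k).filter
    (fun S => ∀ j, ¬((e j).1 ∈ S ∧ (e j).2 ∈ S))).card


section Aux

variable {n k m M : ℕ}

/-- Splitting `Fin M → E` into the first `m` and the last `M - m` coordinates. -/
def splitE (hmM : m ≤ M) (E : Type*) :
    ((Fin m → E) × (Fin (M - m) → E)) ≃ (Fin M → E) where
  toFun p := fun j => if h : (j : ℕ) < m then p.1 ⟨j, h⟩ else p.2 ⟨(j : ℕ) - m, by omega⟩
  invFun ω := (fun i => ω (Fin.castLE hmM i), fun i => ω ⟨m + i, by omega⟩)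
  left_inv := by
    rintro ⟨a, b⟩
    ext i
    · simp [Fin.castLE]
    · have : ¬ (m + (i : ℕ) < m) := by omega
      simp only [this, dif_neg, not_false_iff]
      congr 1
      ext
      simp
  right_inv := by
    intro ω
    funext j
    by_cases h : (j : ℕ) < m
    · simp [h, Fin.castLE]
    · simp only [h, dif_neg, not_false_iff]
      congr 1
      ext
      simp
      omega

lemma splitE_castLE (hmM : m ≤ M) {E : Type*} (p : (Fin m → E) × (Fin (M - m) → E))
    (i : Fin m) : splitE hmM E p (Fin.castLE hmM i) = p.1 i := by
  simp [splitE, Fin.castLE]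

lemma splitE_high (hmM : m ≤ M) {E : Type*} (p : (Fin m → E) × (Fin (M - m) → E))
    (i : Fin (M - m)) (hi : m + (i : ℕ) < M) : splitE hmM E p ⟨m + i, hi⟩ = p.2 i := by
  simp only [splitE, Equiv.coe_fn_mk]
  rw [dif_neg (by omega)]
  exact congrArg p.2 (Fin.ext (by simp))

lemma splitE_forall (hmM : m ≤ M) {E : Type*} (p : (Fin m → E) × (Fin (M - m) → E))
    (Q : E → Prop) :
    (∀ j : Fin M, Q (splitE hmM E p j)) ↔
      ((∀ j : Fin m, Q (p.1 j)) ∧ (∀ i : Fin (M - m), Q (p.2 i))) := by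
  constructor
  · intro hQ
    refine ⟨fun j => ?_, fun i => ?_⟩
    · have := hQ (Fin.castLE hmM j); rwa [splitE_castLE] at this
    · have hi : m + (i : ℕ) < M := by omega
      have := hQ ⟨m + i, hi⟩; rwa [splitE_high] at this
  · rintro ⟨h1, h2⟩ j
    by_cases hj : (j : ℕ) < m
    · simpa [splitE, hj] using h1 ⟨j, hj⟩
    · simp only [splitE, Equiv.coe_fn_mk, dif_neg hj]
      exact h2 _

lemma count_pi {E : Type*} [Fintype E] (t : ℕ) (P : E → Prop) [DecidablePred P] :
    ∑ b : Fin t → E, (if ∀ i, P (b i) then 1 else 0 : ℕ) = (univ.filter P).card ^ t := by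
  rw [← Finset.card_filter]
  have : (univ.filter fun b : Fin t → E => ∀ i, P (b i))
      = Fintype.piFinset (fun _ : Fin t => univ.filter P) := by
    ext b
    simp [Fintype.mem_piFinset]
  rw [this, Fintype.card_piFinset]
  simp

lemma edge_count (S : Finset (Fin n)) (hS : S.card = k) :
    (univ.filter fun e : Fin n × Fin n => ¬((e.1 ∈ S) ∧ (e.2 ∈ S))).card = n ^ 2 - k ^ 2 := by
  have h1 : (univ.filter fun e : Fin n × Fin n => (e.1 ∈ S) ∧ (e.2 ∈ S)) = S ×ˢ S := by
    ext e; simp [Finset.mem_product]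
  have h2 := Finset.card_filter_add_card_filter_not (s := (univ : Finset (Fin n × Fin n)))
    (p := fun e : Fin n × Fin n => (e.1 ∈ S) ∧ (e.2 ∈ S))
  rw [h1] at h2
  have h3 : (S ×ˢ S).card = k ^ 2 := by rw [Finset.card_product, hS]; ring
  have h4 : (univ : Finset (Fin n × Fin n)).card = n ^ 2 := by
    simp [Finset.card_univ]; ring
  omega

lemma sum_restrict (hmM : m ≤ M) {E : Type*} [Fintype E] (f : (Fin m → E) → ℕ) :
    ∑ ω : Fin M → E, f (fun j => ω (Fin.castLE hmM j))
    = (Fintype.card E) ^ (M - m) * ∑ e : Fin m → E, f e := by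
  rw [← Equiv.sum_comp (splitE hmM E)]
  have hr : ∀ p : (Fin m → E) × (Fin (M - m) → E),
      (fun j => splitE hmM E p (Fin.castLE hmM j)) = p.1 := by
    intro p; funext j; exact splitE_castLE hmM p j
  simp_rw [hr]
  rw [Fintype.sum_prod_type]
  simp only [Finset.sum_const, smul_eq_mul, Finset.card_univ, Fintype.card_fun,
    Fintype.card_fin]
  exact (Finset.mul_sum _ _ _).symm

lemma keym (hmM : m ≤ M) (P : (Fin m → Fin n × Fin n) → Prop) [DecidablePred P] :
    ∑ ω ∈ univ.filter (fun ω : Fin M → Fin n × Fin n => P (fun j => ω (Fin.castLE hmM j))),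
        indepCount n k m (fun j => ω (Fin.castLE hmM j))
    = (n ^ 2) ^ (M - m) *
      ∑ e : Fin m → Fin n × Fin n, if P e then indepCount n k m e else 0 := by
  rw [Finset.sum_filter]
  have := sum_restrict (hmM := hmM) (E := Fin n × Fin n)
    (f := fun e => if P e then indepCount n k m e else 0)
  try simp only at this
  rw [this]
  have hc : Fintype.card (Fin n × Fin n) = n ^ 2 := by
    simp [Fintype.card_prod]; ring
  rw [hc]

lemma keyM (hmM : m ≤ M) (P : (Fin m → Fin n × Fin n) → Prop) [DecidablePred P] :
    ∑ ω ∈ univ.filter (fun ω : Fin M → Fin n × Fin n => P (fun j => ω (Fin.castLE hmM j))),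
        indepCount n k M ω
    = (n ^ 2 - k ^ 2) ^ (M - m) *
      ∑ e : Fin m → Fin n × Fin n, if P e then indepCount n k m e else 0 := by
  rw [Finset.sum_filter]
  have step1 : ∀ ω : Fin M → Fin n × Fin n,
      (if P (fun j => ω (Fin.castLE hmM j)) then indepCount n k M ω else 0)
      = ∑ S ∈ (univ : Finset (Fin n)).powersetCard k,
          (if P (fun j => ω (Fin.castLE hmM j)) then 1 else 0) *
          (if ∀ j, ¬((ω j).1 ∈ S ∧ (ω j).2 ∈ S) then 1 else 0) := by
    intro ω
    by_cases hP : P (fun j => ω (Fin.castLE hmM j))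
    · rw [if_pos hP, indepCount, Finset.card_filter]
      refine Finset.sum_congr rfl fun S _ => ?_
      rw [if_pos hP, one_mul]
    · rw [if_neg hP]
      refine (Finset.sum_eq_zero fun S _ => ?_).symm
      rw [if_neg hP, zero_mul]
  simp_rw [step1]
  rw [Finset.sum_comm]
  have step2 : ∀ S ∈ (univ : Finset (Fin n)).powersetCard k,
      (∑ ω : Fin M → Fin n × Fin n,
        (if P (fun j => ω (Fin.castLE hmM j)) then 1 else 0) *
        (if ∀ j, ¬((ω j).1 ∈ S ∧ (ω j).2 ∈ S) then 1 else 0))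
      = (n ^ 2 - k ^ 2) ^ (M - m) *
        ∑ e : Fin m → Fin n × Fin n,
          (if P e then 1 else 0) *
          (if ∀ j, ¬((e j).1 ∈ S ∧ (e j).2 ∈ S) then 1 else 0) := by
    intro S hS
    have hScard : S.card = k := (Finset.mem_powersetCard.mp hS).2
    rw [← Equiv.sum_comp (splitE hmM (Fin n × Fin n))]
    have key : ∀ p : (Fin m → Fin n × Fin n) × (Fin (M - m) → Fin n × Fin n),
        (if P (fun j => splitE hmM _ p (Fin.castLE hmM j)) then 1 else 0) *
          (if ∀ j, ¬(((splitE hmM _ p) j).1 ∈ S ∧ ((splitE hmM _ p) j).2 ∈ S) then 1 else 0)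
        = ((if P p.1 then 1 else 0) *
            (if ∀ j : Fin m, ¬((p.1 j).1 ∈ S ∧ (p.1 j).2 ∈ S) then 1 else 0))
          * (if ∀ i : Fin (M - m), ¬((p.2 i).1 ∈ S ∧ (p.2 i).2 ∈ S) then 1 else 0) := by
      intro p
      have h1 : (fun j => splitE hmM _ p (Fin.castLE hmM j)) = p.1 :=
        funext (splitE_castLE hmM p)
      have hiff := splitE_forall hmM p (fun x : Fin n × Fin n => ¬(x.1 ∈ S ∧ x.2 ∈ S))
      have h2 : (if ∀ j : Fin M, ¬(((splitE hmM (Fin n × Fin n)) p j).1 ∈ S ∧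
            ((splitE hmM (Fin n × Fin n)) p j).2 ∈ S) then (1 : ℕ) else 0)
          = (if ∀ j : Fin m, ¬((p.1 j).1 ∈ S ∧ (p.1 j).2 ∈ S) then (1 : ℕ) else 0) *
            (if ∀ i : Fin (M - m), ¬((p.2 i).1 ∈ S ∧ (p.2 i).2 ∈ S) then (1 : ℕ) else 0) := by
        by_cases hA : ∀ j : Fin m, ¬((p.1 j).1 ∈ S ∧ (p.1 j).2 ∈ S) <;>
          by_cases hB : ∀ i : Fin (M - m), ¬((p.2 i).1 ∈ S ∧ (p.2 i).2 ∈ S)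
        · rw [if_pos (hiff.mpr ⟨hA, hB⟩), if_pos hA, if_pos hB]
        · rw [if_neg (fun hh => hB (hiff.mp hh).2), if_neg hB, mul_zero]
        · rw [if_neg (fun hh => hA (hiff.mp hh).1), if_neg hA, zero_mul]
        · rw [if_neg (fun hh => hA (hiff.mp hh).1), if_neg hA, zero_mul]
      simp only [h1]
      rw [h2, ← mul_assoc]
    calc ∑ p : (Fin m → Fin n × Fin n) × (Fin (M - m) → Fin n × Fin n),
          (if P (fun j => splitE hmM _ p (Fin.castLE hmM j)) then 1 else 0) *
          (if ∀ j, ¬(((splitE hmM _ p) j).1 ∈ S ∧ ((splitE hmM _ p) j).2 ∈ S) then 1 else 0)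
        = ∑ p : (Fin m → Fin n × Fin n) × (Fin (M - m) → Fin n × Fin n),
            ((if P p.1 then 1 else 0) *
              (if ∀ j : Fin m, ¬((p.1 j).1 ∈ S ∧ (p.1 j).2 ∈ S) then 1 else 0))
            * (if ∀ i : Fin (M - m), ¬((p.2 i).1 ∈ S ∧ (p.2 i).2 ∈ S) then 1 else 0) := by
          exact Finset.sum_congr rfl (fun p _ => key p)
      _ = (∑ a : Fin m → Fin n × Fin n,
            (if P a then 1 else 0) *
              (if ∀ j : Fin m, ¬((a j).1 ∈ S ∧ (a j).2 ∈ S) then 1 else 0))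
          * (∑ b : Fin (M - m) → Fin n × Fin n,
            (if ∀ i, ¬((b i).1 ∈ S ∧ (b i).2 ∈ S) then 1 else 0)) := by
          rw [Fintype.sum_prod_type, Finset.sum_mul]
          refine Finset.sum_congr rfl fun a _ => ?_
          show (∑ y : Fin (M - m) → Fin n × Fin n,
              ((if P a then 1 else 0) *
                (if ∀ j : Fin m, ¬((a j).1 ∈ S ∧ (a j).2 ∈ S) then 1 else 0)) *
              (if ∀ i : Fin (M - m), ¬((y i).1 ∈ S ∧ (y i).2 ∈ S) then 1 else 0)) = _
          rw [← Finset.mul_sum]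
      _ = (n ^ 2 - k ^ 2) ^ (M - m) *
          ∑ e : Fin m → Fin n × Fin n,
            (if P e then 1 else 0) *
            (if ∀ j, ¬((e j).1 ∈ S ∧ (e j).2 ∈ S) then 1 else 0) := by
          have hG : (∑ b : Fin (M - m) → Fin n × Fin n,
              if ∀ i, ¬((b i).1 ∈ S ∧ (b i).2 ∈ S) then (1 : ℕ) else 0)
              = (n ^ 2 - k ^ 2) ^ (M - m) := by
            have hc := count_pi (E := Fin n × Fin n) (M - m)
              (fun x => ¬(x.1 ∈ S ∧ x.2 ∈ S))
            exact hc.trans (congrArg (fun z => z ^ (M - m)) (edge_count S hScard))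
          rw [hG, mul_comm]
  rw [Finset.sum_congr rfl step2, ← Finset.mul_sum, Finset.sum_comm]
  congr 1
  refine Finset.sum_congr rfl (fun e _ => ?_)
  by_cases hP : P e
  · rw [if_pos hP, if_pos hP, indepCount, Finset.card_filter]
    simp only [one_mul]
  · rw [if_neg hP, if_neg hP]
    exact Finset.sum_eq_zero fun S _ => zero_mul _

lemma keyBoth (hmM : m ≤ M) (P : (Fin m → Fin n × Fin n) → Prop) [DecidablePred P] :
    (n ^ 2) ^ (M - m) *
      ∑ ω ∈ univ.filter (fun ω : Fin M → Fin n × Fin n => P (fun j => ω (Fin.castLE hmM j))),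
        indepCount n k M ω
    = (n ^ 2 - k ^ 2) ^ (M - m) *
      ∑ ω ∈ univ.filter (fun ω : Fin M → Fin n × Fin n => P (fun j => ω (Fin.castLE hmM j))),
        indepCount n k m (fun j => ω (Fin.castLE hmM j)) := by
  rw [keyM hmM P, keym hmM P]
  ring

end Aux

/-- If independent `k`-sets still exist after `M` edges with probability `≥ 1-q`,
and `h > 2 E[X_{n,M}(k)]`, then `Pr[X_{n,m}(k) < E[X_{n,m}(k)]/h] ≤ 2q`. -/
theorem stmt_8 (n k m M : ℕ) (hn : 0 < n) (hk1 : 1 ≤ k) (hkn : k ≤ n) (hmM : m ≤ M)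
    (q h : ℝ) (hq0 : 0 ≤ q) (hq1 : q ≤ 1)
    (hh : h > 2 * ((∑ ω : Fin M → Fin n × Fin n, (indepCount n k M ω : ℝ))
        / (Fintype.card (Fin M → Fin n × Fin n) : ℝ)))
    (hpos : (((Finset.univ : Finset (Fin M → Fin n × Fin n)).filter
        (fun ω => 0 < indepCount n k M ω)).card : ℝ)
        / (Fintype.card (Fin M → Fin n × Fin n) : ℝ) ≥ 1 - q) :
    (((Finset.univ : Finset (Fin M → Fin n × Fin n)).filter
        (fun ω => (indepCount n k m (fun j => ω (Fin.castLE hmM j)) : ℝ)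
          < ((∑ ω' : Fin M → Fin n × Fin n,
              (indepCount n k m (fun j => ω' (Fin.castLE hmM j)) : ℝ))
            / (Fintype.card (Fin M → Fin n × Fin n) : ℝ)) / h)).card : ℝ)
      / (Fintype.card (Fin M → Fin n × Fin n) : ℝ) ≤ 2 * q := by
  classical
  set N : ℝ := (Fintype.card (Fin M → Fin n × Fin n) : ℝ) with hNdef
  have hNpos : (0 : ℝ) < N := by
    rw [hNdef]
    have : Nonempty (Fin M → Fin n × Fin n) := ⟨fun _ => (⟨0, hn⟩, ⟨0, hn⟩)⟩
    exact_mod_cast Fintype.card_pos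
  set Em : ℝ := ((∑ ω' : Fin M → Fin n × Fin n,
      (indepCount n k m (fun j => ω' (Fin.castLE hmM j)) : ℝ)) / N) with hEmdef
  set EM : ℝ := ((∑ ω : Fin M → Fin n × Fin n, (indepCount n k M ω : ℝ)) / N) with hEMdef
  set A : Finset (Fin M → Fin n × Fin n) :=
    (Finset.univ.filter
      (fun ω => (indepCount n k m (fun j => ω (Fin.castLE hmM j)) : ℝ) < Em / h)) with hAdef
  show (A.card : ℝ) / N ≤ 2 * q
  -- basic positivity facts
  have hsumM_nonneg : (0 : ℝ) ≤ ∑ ω : Fin M → Fin n × Fin n, (indepCount n k M ω : ℝ) :=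
    Finset.sum_nonneg fun ω _ => by positivity
  have hsumm_nonneg : (0 : ℝ) ≤ ∑ ω' : Fin M → Fin n × Fin n,
      (indepCount n k m (fun j => ω' (Fin.castLE hmM j)) : ℝ) :=
    Finset.sum_nonneg fun ω _ => by positivity
  have hEM0 : 0 ≤ EM := div_nonneg hsumM_nonneg hNpos.le
  have hEm0 : 0 ≤ Em := div_nonneg hsumm_nonneg hNpos.le
  have hh0 : 0 < h := lt_of_le_of_lt (by linarith) hh
  -- the key double counting identities, in ℝ
  have hB : (0 : ℝ) < ((n : ℝ) ^ 2) ^ (M - m) := by positivity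
  have hCB : ((n ^ 2 - k ^ 2 : ℕ) : ℝ) ^ (M - m) ≤ ((n : ℝ) ^ 2) ^ (M - m) := by
    apply pow_le_pow_left₀ (by positivity)
    have : ((n ^ 2 - k ^ 2 : ℕ) : ℝ) ≤ ((n ^ 2 : ℕ) : ℝ) := by
      exact_mod_cast Nat.sub_le _ _
    calc ((n ^ 2 - k ^ 2 : ℕ) : ℝ) ≤ ((n ^ 2 : ℕ) : ℝ) := this
      _ = (n : ℝ) ^ 2 := by push_cast; ring
  have hC0 : (0 : ℝ) ≤ ((n ^ 2 - k ^ 2 : ℕ) : ℝ) ^ (M - m) := by positivity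
  -- identity over the whole space
  have keyT := keyBoth (n := n) (k := k) hmM (fun _ => True)
  rw [Finset.filter_true] at keyT
  have keyTR : ((n : ℝ) ^ 2) ^ (M - m) * (∑ ω : Fin M → Fin n × Fin n, (indepCount n k M ω : ℝ))
      = ((n ^ 2 - k ^ 2 : ℕ) : ℝ) ^ (M - m) *
        (∑ ω : Fin M → Fin n × Fin n,
          (indepCount n k m (fun j => ω (Fin.castLE hmM j)) : ℝ)) := by
    have := congrArg (Nat.cast : ℕ → ℝ) keyT
    push_cast at this
    convert this using 2 <;> push_cast <;> ring
  -- identity over the event A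
  have keyA := keyBoth (n := n) (k := k) hmM
    (fun e => (indepCount n k m e : ℝ) < Em / h)
  have hAeq : (univ.filter (fun ω : Fin M → Fin n × Fin n =>
      (indepCount n k m (fun j => ω (Fin.castLE hmM j)) : ℝ) < Em / h)) = A := by
    ext ω
    simp [hAdef]
  rw [hAeq] at keyA
  have keyAR : ((n : ℝ) ^ 2) ^ (M - m) * (∑ ω ∈ A, (indepCount n k M ω : ℝ))
      = ((n ^ 2 - k ^ 2 : ℕ) : ℝ) ^ (M - m) *
        (∑ ω ∈ A, (indepCount n k m (fun j => ω (Fin.castLE hmM j)) : ℝ)) := by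
    have := congrArg (Nat.cast : ℕ → ℝ) keyA
    push_cast at this
    convert this using 2 <;> push_cast <;> ring
  -- bound the conditional sum on A
  have hsumAm : (∑ ω ∈ A, (indepCount n k m (fun j => ω (Fin.castLE hmM j)) : ℝ))
      ≤ (A.card : ℝ) * (Em / h) := by
    have := Finset.sum_le_card_nsmul A
      (fun ω => (indepCount n k m (fun j => ω (Fin.castLE hmM j)) : ℝ)) (Em / h)
      (fun ω hω => le_of_lt (Finset.mem_filter.mp hω).2)
    simpa [nsmul_eq_mul] using this
  -- E[X_M] relation: B * EM * N = C * Em * N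
  have hE_rel : ((n : ℝ) ^ 2) ^ (M - m) * EM = ((n ^ 2 - k ^ 2 : ℕ) : ℝ) ^ (M - m) * Em := by
    rw [hEMdef, hEmdef]
    field_simp
    linarith [keyTR]
  -- bound on sum over A of X_M
  have hsumAM : (∑ ω ∈ A, (indepCount n k M ω : ℝ)) ≤ (A.card : ℝ) * (EM / h) := by
    have h1 : ((n : ℝ) ^ 2) ^ (M - m) * (∑ ω ∈ A, (indepCount n k M ω : ℝ))
        ≤ ((n ^ 2 - k ^ 2 : ℕ) : ℝ) ^ (M - m) * ((A.card : ℝ) * (Em / h)) := by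
      rw [keyAR]
      exact mul_le_mul_of_nonneg_left hsumAm hC0
    have h2 : ((n ^ 2 - k ^ 2 : ℕ) : ℝ) ^ (M - m) * ((A.card : ℝ) * (Em / h))
        = ((n : ℝ) ^ 2) ^ (M - m) * ((A.card : ℝ) * (EM / h)) := by
      field_simp
      calc ((n ^ 2 - k ^ 2 : ℕ) : ℝ) ^ (M - m) * (A.card : ℝ) * Em
          = (A.card : ℝ) * (((n ^ 2 - k ^ 2 : ℕ) : ℝ) ^ (M - m) * Em) := by ring
        _ = (A.card : ℝ) * (((n : ℝ) ^ 2) ^ (M - m) * EM) := by rw [← hE_rel]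
        _ = (A.card : ℝ) * ((n : ℝ) ^ 2) ^ (M - m) * EM := by ring
    rw [h2] at h1
    exact le_of_mul_le_mul_left h1 hB
  -- splitting the event A by whether X_M is positive
  have hsplitN : A.card = (A.filter (fun ω => 0 < indepCount n k M ω)).card
      + (A.filter (fun ω => ¬ 0 < indepCount n k M ω)).card :=
    (Finset.card_filter_add_card_filter_not
      (p := fun ω => 0 < indepCount n k M ω)).symm
  have hsubset : (A.filter (fun ω => ¬ 0 < indepCount n k M ω)).card
      ≤ ((Finset.univ : Finset (Fin M → Fin n × Fin n)).filter
          (fun ω => ¬ 0 < indepCount n k M ω)).card := by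
    apply Finset.card_le_card
    intro ω hω
    simp only [Finset.mem_filter] at hω ⊢
    exact ⟨Finset.mem_univ _, hω.2⟩
  -- zero-set bound from hpos
  have hzero : (((Finset.univ : Finset (Fin M → Fin n × Fin n)).filter
      (fun ω => ¬ 0 < indepCount n k M ω)).card : ℝ) ≤ q * N := by
    have hcards := Finset.card_filter_add_card_filter_not
      (s := (Finset.univ : Finset (Fin M → Fin n × Fin n)))
      (p := fun ω => 0 < indepCount n k M ω)
    rw [Finset.card_univ] at hcards
    have hcardsR : (((Finset.univ : Finset (Fin M → Fin n × Fin n)).filter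
          (fun ω => 0 < indepCount n k M ω)).card : ℝ)
        + (((Finset.univ : Finset (Fin M → Fin n × Fin n)).filter
          (fun ω => ¬ 0 < indepCount n k M ω)).card : ℝ) = N := by
      rw [hNdef]
      exact_mod_cast congrArg (Nat.cast : ℕ → ℝ) hcards
    have hposR : (1 - q) * N ≤ (((Finset.univ : Finset (Fin M → Fin n × Fin n)).filter
        (fun ω => 0 < indepCount n k M ω)).card : ℝ) :=
      (le_div_iff₀ hNpos).mp hpos
    linarith
  -- card of the positive part of A is at most the X_M-sum over A
  have hposA : ((A.filter (fun ω => 0 < indepCount n k M ω)).card : ℝ)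
      ≤ ∑ ω ∈ A, (indepCount n k M ω : ℝ) := by
    calc ((A.filter (fun ω => 0 < indepCount n k M ω)).card : ℝ)
        ≤ ∑ ω ∈ A.filter (fun ω => 0 < indepCount n k M ω), (indepCount n k M ω : ℝ) := by
          have := Finset.card_nsmul_le_sum (A.filter (fun ω => 0 < indepCount n k M ω))
            (fun ω => (indepCount n k M ω : ℝ)) 1
            (fun ω hω => by show (1:ℝ) ≤ (indepCount n k M ω : ℝ); exact_mod_cast (Finset.mem_filter.mp hω).2)
          simpa using this
      _ ≤ ∑ ω ∈ A, (indepCount n k M ω : ℝ) :=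
          Finset.sum_le_sum_of_subset_of_nonneg (Finset.filter_subset _ _)
            (fun ω _ _ => by positivity)
  -- combine
  have hcardA : (A.card : ℝ) ≤ (A.card : ℝ) * (EM / h) + q * N := by
    have h1 : (A.card : ℝ) = ((A.filter (fun ω => 0 < indepCount n k M ω)).card : ℝ)
        + ((A.filter (fun ω => ¬ 0 < indepCount n k M ω)).card : ℝ) := by
      exact_mod_cast hsplitN
    have h2 : ((A.filter (fun ω => ¬ 0 < indepCount n k M ω)).card : ℝ)
        ≤ (((Finset.univ : Finset (Fin M → Fin n × Fin n)).filter
            (fun ω => ¬ 0 < indepCount n k M ω)).card : ℝ) := by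
      exact_mod_cast hsubset
    linarith
  have hEMh : EM / h < 1 / 2 := by
    rw [div_lt_iff₀ hh0]
    linarith
  have hAnonneg : (0 : ℝ) ≤ (A.card : ℝ) := by positivity
  have hmul : (A.card : ℝ) * (EM / h) ≤ (A.card : ℝ) * (1 / 2) :=
    mul_le_mul_of_nonneg_left hEMh.le hAnonneg
  rw [div_le_iff₀ hNpos]
  linarith
end

section
/- Collider correctness (deterministic): let $G$ be a graph and $\sigma, \tau$ independent sets of $G$ of size $k$ admitting an augmenting vertex $v$. Then the vertex sets $\sigma'', \tau''$ returned by the Collider procedure satisfy: (1) both are independent sets of $G$ of size $k$; (2) $|\sigma'' \cap \tau''| = |\sigma \cap \tau| + 1$; (3) there exist independent sets $\sigma', \tau'$ of size $k+1$ with $\sigma \subset \sigma' \supset \sigma''$ and $\tau \subset \tau' \supset \tau''$ up to bounded symmetric difference (each consecutive pair has Hamming distance at most $20d$, assuming $|N_v \cap \sigma|, |N_v \cap \tau| \le 7d$). -/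
open Finset

private lemma aug_key {V : Type*} [Fintype V] [DecidableEq V] (G : SimpleGraph V)
    [DecidableRel G.Adj] (σ : Finset V) (v w : V)
    (h1 : (σ.filter (fun u => G.Adj w u)).card = 1)
    (h2 : (σ.filter (fun u => G.Adj w u ∧ G.Adj v u)).card = 1)
    {a : V} (ha : a ∈ σ) (hadj : G.Adj w a) : G.Adj v a := by
  have hsub : σ.filter (fun u => G.Adj w u ∧ G.Adj v u) ⊆ σ.filter (fun u => G.Adj w u) := by
    intro x hx
    simp only [mem_filter] at hx ⊢
    exact ⟨hx.1, hx.2.1⟩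
  have heq : σ.filter (fun u => G.Adj w u ∧ G.Adj v u) = σ.filter (fun u => G.Adj w u) :=
    eq_of_subset_of_card_le hsub (by omega)
  have hmem : a ∈ σ.filter (fun u => G.Adj w u) := mem_filter.2 ⟨ha, hadj⟩
  rw [← heq] at hmem
  exact (mem_filter.1 hmem).2.2

private lemma collider_side {V : Type*} [Fintype V] [DecidableEq V] (G : SimpleGraph V)
    [DecidableRel G.Adj] (k : ℕ) (σ : Finset V) (v : V) (I : Finset V)
    (hσk : σ.card = k)
    (hσind : ∀ a ∈ σ, ∀ b ∈ σ, ¬ G.Adj a b)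
    (hv : v ∉ σ)
    (hIout : ∀ w ∈ I, w ∉ σ ∧ w ≠ v)
    (hIcard : I.card = (σ.filter (fun u => G.Adj v u)).card)
    (hIv : ∀ w ∈ I, ¬ G.Adj v w)
    (hIind : ∀ a ∈ I, ∀ b ∈ I, ¬ G.Adj a b)
    (hIdeg : ∀ w ∈ I, (σ.filter (fun u => G.Adj w u)).card = 1 ∧
      (σ.filter (fun u => G.Adj w u ∧ G.Adj v u)).card = 1) :
    ((σ \ σ.filter (fun u => G.Adj v u)) ∪ I ∪ {v}).card = k + 1 ∧
    (∀ a ∈ (σ \ σ.filter (fun u => G.Adj v u)) ∪ I ∪ {v},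
      ∀ b ∈ (σ \ σ.filter (fun u => G.Adj v u)) ∪ I ∪ {v}, ¬ G.Adj a b) := by
  have hNsub : σ.filter (fun u => G.Adj v u) ⊆ σ := filter_subset _ _
  have hd1 : Disjoint (σ \ σ.filter (fun u => G.Adj v u)) I := by
    rw [disjoint_left]; intro x hx hxI
    exact (hIout x hxI).1 (mem_sdiff.1 hx).1
  have hd2 : Disjoint ((σ \ σ.filter (fun u => G.Adj v u)) ∪ I) ({v} : Finset V) := by
    simp only [disjoint_singleton_right, mem_union, mem_sdiff]
    rintro (⟨h, _⟩ | h)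
    · exact hv h
    · exact (hIout v h).2 rfl
  have key : ∀ w ∈ I, ∀ a ∈ σ, G.Adj w a → G.Adj v a := fun w hw a ha hadj =>
    aug_key G σ v w (hIdeg w hw).1 (hIdeg w hw).2 ha hadj
  constructor
  · rw [card_union_of_disjoint hd2, card_union_of_disjoint hd1, card_sdiff_of_subset hNsub,
      card_singleton, hIcard]
    have : (σ.filter (fun u => G.Adj v u)).card ≤ k := hσk ▸ card_le_card hNsub
    omega
  · intro a ha b hb hab
    simp only [mem_union, mem_sdiff, mem_singleton] at ha hb
    rcases ha with ((⟨haσ, haN⟩ | haI) | rfl) <;>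
      rcases hb with ((⟨hbσ, hbN⟩ | hbI) | rfl)
    · exact hσind a haσ b hbσ hab
    · exact haN (mem_filter.2 ⟨haσ, key b hbI a haσ hab.symm⟩)
    · exact haN (mem_filter.2 ⟨haσ, hab.symm⟩)
    · exact hbN (mem_filter.2 ⟨hbσ, key a haI b hbσ hab⟩)
    · exact hIind a haI b hbI hab
    · exact hIv a haI hab.symm
    · exact hbN (mem_filter.2 ⟨hbσ, hab⟩)
    · exact hIv b hbI hab
    · exact G.loopless.irrefl _ hab

/-- Deterministic correctness of the Collider procedure: given independent sets
`σ, τ` of size `k` with an augmenting vertex `v` (with terminal sets `Iσ, Iτ`),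
the sets `σ'' , τ''` returned by Collider are independent sets of size `k`, their
intersection grows by one, and the intermediate sets `σ', τ'` are independent sets
of size `k+1` at Hamming distance at most `20d` from their neighbours in the chain. -/
theorem stmt_14 {V : Type*} [Fintype V] [DecidableEq V] (G : SimpleGraph V)
    [DecidableRel G.Adj] (k d : ℕ) (hd : 1 ≤ d) (σ τ : Finset V) (v : V)
    (Iσ Iτ : Finset V) (wσ wτ : V)
    (hσk : σ.card = k) (hτk : τ.card = k)
    (hσind : ∀ a ∈ σ, ∀ b ∈ σ, ¬ G.Adj a b)
    (hτind : ∀ a ∈ τ, ∀ b ∈ τ, ¬ G.Adj a b)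
    (hv : v ∉ σ ∪ τ)
    (hvστ : ∀ u ∈ σ ∩ τ, ¬ G.Adj v u)
    (hIσout : ∀ w ∈ Iσ, w ∉ σ ∪ τ ∧ w ≠ v)
    (hIσcard : Iσ.card = (σ.filter (fun u => G.Adj v u)).card)
    (hIσ7d : Iσ.card ≤ 7 * d)
    (hNvσ7d : (σ.filter (fun u => G.Adj v u)).card ≤ 7 * d)
    (hIσv : ∀ w ∈ Iσ, ¬ G.Adj v w)
    (hIσind : ∀ a ∈ Iσ, ∀ b ∈ Iσ, ¬ G.Adj a b)
    (hIσdeg : ∀ w ∈ Iσ, (σ.filter (fun u => G.Adj w u)).card = 1 ∧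
      (σ.filter (fun u => G.Adj w u ∧ G.Adj v u)).card = 1)
    (hIτout : ∀ w ∈ Iτ, w ∉ σ ∪ τ ∧ w ≠ v)
    (hIτcard : Iτ.card = (τ.filter (fun u => G.Adj v u)).card)
    (hIτ7d : Iτ.card ≤ 7 * d)
    (hNvτ7d : (τ.filter (fun u => G.Adj v u)).card ≤ 7 * d)
    (hIτv : ∀ w ∈ Iτ, ¬ G.Adj v w)
    (hIτind : ∀ a ∈ Iτ, ∀ b ∈ Iτ, ¬ G.Adj a b)
    (hIτdeg : ∀ w ∈ Iτ, (τ.filter (fun u => G.Adj w u)).card = 1 ∧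
      (τ.filter (fun u => G.Adj w u ∧ G.Adj v u)).card = 1)
    (hIστ : Disjoint Iσ Iτ)
    (hwσ : wσ ∈ (σ \ σ.filter (fun u => G.Adj v u)) ∪ Iσ ∪ {v} ∧ wσ ≠ v ∧ wσ ∉ σ ∩ τ)
    (hwτ : wτ ∈ (τ \ τ.filter (fun u => G.Adj v u)) ∪ Iτ ∪ {v} ∧ wτ ≠ v ∧ wτ ∉ σ ∩ τ) :
    let σ' := (σ \ σ.filter (fun u => G.Adj v u)) ∪ Iσ ∪ {v}
    let τ' := (τ \ τ.filter (fun u => G.Adj v u)) ∪ Iτ ∪ {v}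
    let σ'' := σ'.erase wσ
    let τ'' := τ'.erase wτ
    (σ''.card = k ∧ τ''.card = k ∧
      (∀ a ∈ σ'', ∀ b ∈ σ'', ¬ G.Adj a b) ∧ (∀ a ∈ τ'', ∀ b ∈ τ'', ¬ G.Adj a b)) ∧
    (σ'' ∩ τ'').card = (σ ∩ τ).card + 1 ∧
    (σ'.card = k + 1 ∧ τ'.card = k + 1 ∧
      (∀ a ∈ σ', ∀ b ∈ σ', ¬ G.Adj a b) ∧ (∀ a ∈ τ', ∀ b ∈ τ', ¬ G.Adj a b) ∧
      ((σ \ σ') ∪ (σ' \ σ)).card ≤ 20 * d ∧ ((σ' \ σ'') ∪ (σ'' \ σ')).card ≤ 20 * d ∧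
      ((τ \ τ') ∪ (τ' \ τ)).card ≤ 20 * d ∧ ((τ' \ τ'') ∪ (τ'' \ τ')).card ≤ 20 * d) := by
  have hvσ : v ∉ σ := fun h => hv (mem_union_left _ h)
  have hvτ : v ∉ τ := fun h => hv (mem_union_right _ h)
  obtain ⟨hσ'card, hσ'ind⟩ := collider_side G k σ v Iσ hσk hσind hvσ
    (fun w hw => ⟨fun h => (hIσout w hw).1 (mem_union_left _ h), (hIσout w hw).2⟩)
    hIσcard hIσv hIσind hIσdeg
  obtain ⟨hτ'card, hτ'ind⟩ := collider_side G k τ v Iτ hτk hτind hvτ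
    (fun w hw => ⟨fun h => (hIτout w hw).1 (mem_union_right _ h), (hIτout w hw).2⟩)
    hIτcard hIτv hIτind hIτdeg
  intro σ' τ' σ'' τ''
  -- basic memberships
  have hvσ' : v ∈ σ' := mem_union_right _ (mem_singleton_self v)
  have hvτ' : v ∈ τ' := mem_union_right _ (mem_singleton_self v)
  have hvσ'' : v ∈ σ'' := mem_erase.2 ⟨fun h => hwσ.2.1 h.symm, hvσ'⟩
  have hvτ'' : v ∈ τ'' := mem_erase.2 ⟨fun h => hwτ.2.1 h.symm, hvτ'⟩
  have hσ''card : σ''.card = k := by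
    show (σ'.erase wσ).card = k
    rw [card_erase_of_mem hwσ.1, hσ'card]
    omega
  have hτ''card : τ''.card = k := by
    show (τ'.erase wτ).card = k
    rw [card_erase_of_mem hwτ.1, hτ'card]
    omega
  -- intersection
  have hinter : σ'' ∩ τ'' = insert v (σ ∩ τ) := by
    apply Subset.antisymm
    · intro u hu
      obtain ⟨hu1, hu2⟩ := mem_inter.1 hu
      have huσ' : u ∈ σ' := mem_of_mem_erase hu1
      have huτ' : u ∈ τ' := mem_of_mem_erase hu2
      by_cases huv : u = v
      · subst huv; exact mem_insert_self _ _
      · simp only [σ', τ', mem_union, mem_sdiff, mem_singleton] at huσ' huτ'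
        rcases huσ' with ((⟨huσ, _⟩ | huIσ) | rfl)
        · rcases huτ' with ((⟨huτ, _⟩ | huIτ) | rfl)
          · exact mem_insert_of_mem (mem_inter.2 ⟨huσ, huτ⟩)
          · exact absurd (mem_union_left τ huσ) (hIτout u huIτ).1
          · exact absurd rfl huv
        · rcases huτ' with ((⟨huτ, _⟩ | huIτ) | rfl)
          · exact absurd (mem_union_right σ huτ) (hIσout u huIσ).1
          · exact absurd huIτ (disjoint_left.1 hIστ huIσ)
          · exact absurd rfl huv
        · exact absurd rfl huv
    · intro u hu
      rcases mem_insert.1 hu with rfl | hu'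
      · exact mem_inter.2 ⟨hvσ'', hvτ''⟩
      · have hadj : ¬ G.Adj v u := hvστ u hu'
        obtain ⟨huσ, huτ⟩ := mem_inter.1 hu'
        have h1 : u ∈ σ' := mem_union_left _ (mem_union_left _
          (mem_sdiff.2 ⟨huσ, fun h => hadj (mem_filter.1 h).2⟩))
        have h2 : u ∈ τ' := mem_union_left _ (mem_union_left _
          (mem_sdiff.2 ⟨huτ, fun h => hadj (mem_filter.1 h).2⟩))
        exact mem_inter.2 ⟨mem_erase.2 ⟨fun h => hwσ.2.2 (h ▸ hu'), h1⟩,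
          mem_erase.2 ⟨fun h => hwτ.2.2 (h ▸ hu'), h2⟩⟩
  have hintercard : (σ'' ∩ τ'').card = (σ ∩ τ).card + 1 := by
    rw [hinter, card_insert_of_notMem (fun h => hvσ (mem_inter.1 h).1)]
  -- Hamming distance σ vs σ'
  have hham : ∀ (ρ : Finset V) (I : Finset V) (hI7 : I.card ≤ 7 * d)
      (hN7 : (ρ.filter (fun u => G.Adj v u)).card ≤ 7 * d),
      ((ρ \ ((ρ \ ρ.filter (fun u => G.Adj v u)) ∪ I ∪ {v})) ∪
        (((ρ \ ρ.filter (fun u => G.Adj v u)) ∪ I ∪ {v}) \ ρ)).card ≤ 20 * d := by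
    intro ρ I hI7 hN7
    have h1 : ρ \ ((ρ \ ρ.filter (fun u => G.Adj v u)) ∪ I ∪ {v}) ⊆
        ρ.filter (fun u => G.Adj v u) := by
      intro x hx
      obtain ⟨hxρ, hx'⟩ := mem_sdiff.1 hx
      by_contra hxN
      exact hx' (mem_union_left _ (mem_union_left _ (mem_sdiff.2 ⟨hxρ, hxN⟩)))
    have h2 : ((ρ \ ρ.filter (fun u => G.Adj v u)) ∪ I ∪ {v}) \ ρ ⊆ I ∪ {v} := by
      intro x hx
      obtain ⟨hx', hxρ⟩ := mem_sdiff.1 hx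
      rcases mem_union.1 hx' with h | h
      · rcases mem_union.1 h with h' | h'
        · exact absurd (mem_sdiff.1 h').1 hxρ
        · exact mem_union_left _ h'
      · exact mem_union_right _ h
    calc _ ≤ (ρ \ ((ρ \ ρ.filter (fun u => G.Adj v u)) ∪ I ∪ {v})).card +
          ((((ρ \ ρ.filter (fun u => G.Adj v u)) ∪ I ∪ {v}) \ ρ)).card := card_union_le _ _
      _ ≤ (ρ.filter (fun u => G.Adj v u)).card + (I ∪ {v}).card :=
          Nat.add_le_add (card_le_card h1) (card_le_card h2)
      _ ≤ 7 * d + (I.card + 1) := by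
          have := card_union_le I ({v} : Finset V)
          simp only [card_singleton] at this
          omega
      _ ≤ 20 * d := by omega
  -- Hamming distance σ' vs σ''
  have hham2 : ∀ (ρ' : Finset V) (w : V),
      ((ρ' \ ρ'.erase w) ∪ (ρ'.erase w \ ρ')).card ≤ 20 * d := by
    intro ρ' w
    have hsub : (ρ' \ ρ'.erase w) ∪ (ρ'.erase w \ ρ') ⊆ {w} := by
      intro x hx
      rcases mem_union.1 hx with h | h
      · obtain ⟨h1, h2⟩ := mem_sdiff.1 h
        rw [mem_singleton]
        by_contra hne
        exact h2 (mem_erase.2 ⟨hne, h1⟩)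
      · exact absurd (mem_of_mem_erase (mem_sdiff.1 h).1) (mem_sdiff.1 h).2
    have := card_le_card hsub
    simp only [card_singleton] at this
    omega
  exact ⟨⟨hσ''card, hτ''card,
      fun a ha b hb => hσ'ind a (mem_of_mem_erase ha) b (mem_of_mem_erase hb),
      fun a ha b hb => hτ'ind a (mem_of_mem_erase ha) b (mem_of_mem_erase hb)⟩,
    hintercard,
    hσ'card, hτ'card, hσ'ind, hτ'ind,
    hham σ Iσ hIσ7d hNvσ7d, hham2 σ' wσ, hham τ Iτ hIτ7d hNvτ7d, hham2 τ' wτ⟩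
end

section
/- Total-weight concentration for the Metropolis stationary distribution (local quadratic decay): fix $d$ large and $\lambda_c > 0$, write sizes as $k_{-\epsilon} = \frac{2n}{d}(\ln d - \ln\ln d + 1 - \ln 2 - \epsilon)$, and let $f(\epsilon) = \frac{1}{n}\ln \mathbb{E}[|\mathcal{S}_{k_{-\epsilon}}(G^*(n,m))| \lambda_c^{k_{-\epsilon}}]$. If $\epsilon'$ maximizes the smooth approximation $h(\epsilon) = \frac{2}{d}y(\epsilon)(\ln\lambda_c + \epsilon - \ln(y(\epsilon)/\ln d))$ with $y(\epsilon) = \ln d - \ln\ln d + 1 - \ln 2 - \epsilon$, then for $|q| < (\ln d)^{1/3}$, $h(\epsilon' + q) \le h(\epsilon') - \frac{3}{2d}q^2$. -/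
/-- `y(ε) = ln d - ln ln d + 1 - ln 2 - ε`. -/
noncomputable def yfun (d ε : ℝ) : ℝ :=
  Real.log d - Real.log (Real.log d) + 1 - Real.log 2 - ε

/-- `h(ε) = (2/d) y(ε) (ln λ_c + ε - ln(y(ε)/ln d))`. -/
noncomputable def hfun (d lamc ε : ℝ) : ℝ :=
  2 / d * yfun d ε * (Real.log lamc + ε - Real.log (yfun d ε / Real.log d))

/-- Tangent-line lower bound for `t ↦ t log t`. -/
lemma tlogt_lower (x y : ℝ) (hx : 0 < x) (hy : 0 < y) :
    (Real.log y + 1) * (x - y) ≤ x * Real.log x - y * Real.log y := by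
  have h := Real.log_le_sub_one_of_pos (show 0 < y / x by positivity)
  rw [Real.log_div hy.ne' hx.ne'] at h
  have h2 : x * (Real.log y - Real.log x) ≤ x * (y / x - 1) :=
    mul_le_mul_of_nonneg_left h hx.le
  have h3 : x * (y / x - 1) = y - x := by field_simp
  nlinarith [h2, h3]

/-- Quadratic upper bound for `t ↦ t log t`. -/
lemma tlogt_upper (x y : ℝ) (hx : 0 < x) (hy : 0 < y) :
    x * Real.log x - y * Real.log y ≤ (Real.log y + 1) * (x - y) + (x - y) ^ 2 / y := by
  have h := Real.log_le_sub_one_of_pos (show 0 < x / y by positivity)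
  rw [Real.log_div hx.ne' hy.ne'] at h
  have h2 : x * (Real.log x - Real.log y) ≤ x * (x / y - 1) :=
    mul_le_mul_of_nonneg_left h hx.le
  have h3 : x * (x / y - 1) = (x - y) + (x - y) ^ 2 / y := by
    field_simp
    ring
  nlinarith [h2, h3]

/-- Core inequality in abstracted form: if `g(t) = (y0-t)(A+ε'+t-log(y0-t))` has a max
at `t = 0` over `|t| ≤ W`, then quadratic decay. -/
lemma core (A e W y0 : ℝ) (hW : 0 < W) (hy0 : 0 < y0)
    (hpos : ∀ t : ℝ, |t| ≤ W → 0 < y0 - t)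
    (hmax : ∀ t : ℝ, |t| ≤ W →
      (y0 - t) * (A + (e + t) - Real.log (y0 - t)) ≤ y0 * (A + e - Real.log y0)) :
    ∀ q : ℝ, |q| ≤ W →
      (y0 - q) * (A + (e + q) - Real.log (y0 - q))
        ≤ y0 * (A + e - Real.log y0) - q ^ 2 := by
  set B : ℝ := y0 + 1 + Real.log y0 - A - e with hBdef
  have hDelta : ∀ t : ℝ, |t| ≤ W →
      t * B - t ^ 2 - t ^ 2 / y0 ≤
        (y0 - t) * (A + (e + t) - Real.log (y0 - t)) - y0 * (A + e - Real.log y0) ∧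
      (y0 - t) * (A + (e + t) - Real.log (y0 - t)) - y0 * (A + e - Real.log y0)
        ≤ t * B - t ^ 2 := by
    intro t ht
    have hp : 0 < y0 - t := hpos t ht
    have hlo := tlogt_lower (y0 - t) y0 hp hy0
    have hhi := tlogt_upper (y0 - t) y0 hp hy0
    have hsq : (y0 - t - y0) ^ 2 / y0 = t ^ 2 / y0 := by ring_nf
    constructor
    · nlinarith [hhi, hsq]
    · nlinarith [hlo]
  have hBs : ∀ s : ℝ, 0 < s → s ≤ W → |B| ≤ (1 + 1 / y0) * s := by
    intro s hs hsW
    have h1 := (hDelta s (by rwa [abs_of_pos hs])).1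
    have h2 := hmax s (by rwa [abs_of_pos hs])
    have h3 := (hDelta (-s) (by rwa [abs_neg, abs_of_pos hs])).1
    have h4 := hmax (-s) (by rwa [abs_neg, abs_of_pos hs])
    have hq : s ^ 2 / y0 = s ^ 2 * (1 / y0) := by ring
    have hq' : (-s) ^ 2 / y0 = s ^ 2 * (1 / y0) := by ring
    have hB1 : s * B ≤ (1 + 1 / y0) * s ^ 2 := by nlinarith [h1, h2, hq]
    have hB2 : -(s * B) ≤ (1 + 1 / y0) * s ^ 2 := by nlinarith [h3, h4, hq']
    rcases abs_cases B with ⟨hc, _⟩ | ⟨hc, _⟩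
    · rw [hc]; nlinarith [hB1]
    · rw [hc]; nlinarith [hB2]
  have hB0 : B = 0 := by
    by_contra hB
    have habs : 0 < |B| := abs_pos.mpr hB
    have hc : (0 : ℝ) < 1 + 1 / y0 := by positivity
    have hs : 0 < min W (|B| / (2 * (1 + 1 / y0))) := lt_min hW (by positivity)
    have h1 := hBs _ hs (min_le_left _ _)
    have h2 : (1 + 1 / y0) * min W (|B| / (2 * (1 + 1 / y0)))
        ≤ (1 + 1 / y0) * (|B| / (2 * (1 + 1 / y0))) :=
      mul_le_mul_of_nonneg_left (min_le_right _ _) hc.le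
    have h3 : (1 + 1 / y0) * (|B| / (2 * (1 + 1 / y0))) = |B| / 2 := by
      field_simp
    linarith
  intro q hqW
  have h1 := (hDelta q hqW).2
  rw [hB0] at h1
  nlinarith [h1]

/-- Local quadratic decay of `h` at its maximizer `ε'`: for `d` large, if
`(1/2) ln d < y(ε) < ln d` on the window `|ε - ε'| ≤ (ln d)^{1/3}` and `ε'`
maximizes `h` there, then `h(ε'+q) ≤ h(ε') - (3/(2d)) q²` for `|q| < (ln d)^{1/3}`. -/
theorem stmt_19 : ∃ d0 : ℝ, 0 < d0 ∧ ∀ d lamc ε' : ℝ, d0 ≤ d → 0 < lamc →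
    (∀ ε : ℝ, |ε - ε'| ≤ Real.log d ^ ((1 : ℝ) / 3) →
      Real.log d / 2 < yfun d ε ∧ yfun d ε < Real.log d) →
    IsMaxOn (hfun d lamc)
      (Set.Icc (ε' - Real.log d ^ ((1 : ℝ) / 3)) (ε' + Real.log d ^ ((1 : ℝ) / 3))) ε' →
    ∀ q : ℝ, |q| < Real.log d ^ ((1 : ℝ) / 3) →
      hfun d lamc (ε' + q) ≤ hfun d lamc ε' - 3 / (2 * d) * q ^ 2 := by
  refine ⟨2, by norm_num, ?_⟩
  intro d lamc ε' hd hl hy hmax q hq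
  have hd0 : (0 : ℝ) < d := by linarith
  have hD : 0 < Real.log d := Real.log_pos (by linarith)
  have hW : 0 < Real.log d ^ ((1 : ℝ) / 3) := Real.rpow_pos_of_pos hD _
  have hyshift : ∀ t : ℝ, yfun d (ε' + t) = yfun d ε' - t := by
    intro t; simp only [yfun]; ring
  have hypos : ∀ t : ℝ, |t| ≤ Real.log d ^ ((1 : ℝ) / 3) → 0 < yfun d ε' - t := by
    intro t ht
    have h1 := (hy (ε' + t) (by simpa using ht)).1
    rw [hyshift t] at h1
    linarith
  have hy0pos : 0 < yfun d ε' := by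
    have := hypos 0 (by simpa using hW.le); linarith
  have hexp : ∀ t : ℝ, |t| ≤ Real.log d ^ ((1 : ℝ) / 3) →
      hfun d lamc (ε' + t)
        = 2 / d * ((yfun d ε' - t) *
            ((Real.log lamc + Real.log (Real.log d)) + ((ε' + t)
              - Real.log (yfun d ε' - t)))) := by
    intro t ht
    have hp : 0 < yfun d ε' - t := hypos t ht
    rw [hfun, hyshift t, Real.log_div hp.ne' hD.ne']
    ring
  have hexp0 : hfun d lamc ε'
      = 2 / d * (yfun d ε' * ((Real.log lamc + Real.log (Real.log d))
          + (ε' - Real.log (yfun d ε')))) := by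
    have h := hexp 0 (by simpa using hW.le)
    simpa using h
  have hcore := core (Real.log lamc + Real.log (Real.log d)) ε'
      (Real.log d ^ ((1 : ℝ) / 3)) (yfun d ε') hW hy0pos hypos ?_ q hq.le
  · rw [hexp q hq.le, hexp0]
    have h2d : 0 < 2 / d := by positivity
    have hfin : 2 / d * q ^ 2 ≥ 3 / (2 * d) * q ^ 2 := by
      have heq : 2 / d - 3 / (2 * d) = 1 / (2 * d) := by
        field_simp
        ring
      have hnn : 0 ≤ 1 / (2 * d) * q ^ 2 := by positivity
      nlinarith [heq, hnn]
    nlinarith [mul_le_mul_of_nonneg_left hcore h2d.le, hfin]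
  · intro t ht
    have hmem : ε' + t ∈ Set.Icc (ε' - Real.log d ^ ((1 : ℝ) / 3))
        (ε' + Real.log d ^ ((1 : ℝ) / 3)) := by
      constructor
      · linarith [(abs_le.mp ht).1]
      · linarith [(abs_le.mp ht).2]
    have h1 : hfun d lamc (ε' + t) ≤ hfun d lamc ε' := hmax hmem
    rw [hexp t ht, hexp0] at h1
    have h2d : 0 < 2 / d := by positivity
    nlinarith [h1]
end
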